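/- Let F be a field and let A₁ : r₁×c₁, A₂ : r₂×c₂, A₃ : r₃×c₃, B₁ : r_B×c₁, B₂ : r_B×c₂, B₃ : r_B×c₃ be matrices over F, and assume A₂ is of full column rank. Then the ((r₁+r₂+r₃)+r_B)×(c₁+c₂+c₃) block matrix whose top part is the block-diagonal matrix diag{A₁, A₂, A₃} and whose bottom row block is [B₁ B₂ B₃] is of full column rank if and only if the ((r₁+r₃)+r_B)×(c₁+c₃) block matrix whose top part is diag{A₁, A₃} and whose bottom row block is [B₁ B₃] is of full column rank. -/

import Mathlib

open Matrix

lemma sum_elim_eq_zero_iff {α β γ : Type*} [Zero γ] (f : α → γ) (g : β → γ) :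
    Sum.elim f g = 0 ↔ f = 0 ∧ g = 0 := by
  constructor
  · intro h
    constructor <;> ext x
    · exact congrFun h (Sum.inl x)
    · exact congrFun h (Sum.inr x)
  · rintro ⟨h1, h2⟩
    ext (x | x) <;> simp [h1, h2]

/-- If `A₂` is of full column rank, then the block matrix with top part
`diag{A₁, A₂, A₃}` and bottom row block `[B₁ B₂ B₃]` is of full column rank iff the
block matrix with top part `diag{A₁, A₃}` and bottom row block `[B₁ B₃]` is. -/
theorem stmt1 {F : Type*} [Field F] {r₁ r₂ r₃ rB c₁ c₂ c₃ : ℕ}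
    (A₁ : Matrix (Fin r₁) (Fin c₁) F) (A₂ : Matrix (Fin r₂) (Fin c₂) F)
    (A₃ : Matrix (Fin r₃) (Fin c₃) F)
    (B₁ : Matrix (Fin rB) (Fin c₁) F) (B₂ : Matrix (Fin rB) (Fin c₂) F)
    (B₃ : Matrix (Fin rB) (Fin c₃) F)
    (hA₂ : Function.Injective A₂.mulVecLin) :
    Function.Injective (Matrix.fromRows
        (Matrix.fromBlocks (Matrix.fromBlocks A₁ 0 0 A₂) 0 0 A₃)
        (Matrix.fromCols (Matrix.fromCols B₁ B₂) B₃)).mulVecLin ↔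
      Function.Injective (Matrix.fromRows
        (Matrix.fromBlocks A₁ 0 0 A₃)
        (Matrix.fromCols B₁ B₃)).mulVecLin := by
  rw [injective_iff_map_eq_zero] at hA₂
  rw [injective_iff_map_eq_zero, injective_iff_map_eq_zero]
  simp only [mulVecLin_apply] at *
  constructor
  · intro h v hv
    have hvdef : v = Sum.elim (v ∘ Sum.inl) (v ∘ Sum.inr) := by ext (x | x) <;> rfl
    set v₁ : Fin c₁ → F := v ∘ Sum.inl
    set v₃ : Fin c₃ → F := v ∘ Sum.inr
    rw [hvdef] at hv
    simp only [fromRows_mulVec, fromBlocks_mulVec, fromCols_mulVec_sumElim,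
      Sum.elim_comp_inl, Sum.elim_comp_inr, Matrix.zero_mulVec, Matrix.mulVec_zero,
      add_zero, zero_add, sum_elim_eq_zero_iff] at hv
    obtain ⟨⟨h1, h3⟩, h13⟩ := hv
    have := h (Sum.elim (Sum.elim v₁ 0) v₃) ?_
    · rw [hvdef]
      simp only [sum_elim_eq_zero_iff] at this ⊢
      exact ⟨this.1.1, this.2⟩
    · simp only [fromRows_mulVec, fromBlocks_mulVec, fromCols_mulVec_sumElim,
        Sum.elim_comp_inl, Sum.elim_comp_inr, Matrix.zero_mulVec, Matrix.mulVec_zero,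
        add_zero, zero_add, sum_elim_eq_zero_iff]
      exact ⟨⟨⟨h1, trivial⟩, h3⟩, h13⟩
  · intro h v hv
    have hvdef : v = Sum.elim (Sum.elim (v ∘ Sum.inl ∘ Sum.inl) (v ∘ Sum.inl ∘ Sum.inr))
        (v ∘ Sum.inr) := by ext ((x | x) | x) <;> rfl
    set v₁ : Fin c₁ → F := v ∘ Sum.inl ∘ Sum.inl
    set v₂ : Fin c₂ → F := v ∘ Sum.inl ∘ Sum.inr
    set v₃ : Fin c₃ → F := v ∘ Sum.inr
    rw [hvdef] at hv
    simp only [fromRows_mulVec, fromBlocks_mulVec, fromCols_mulVec_sumElim,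
      Sum.elim_comp_inl, Sum.elim_comp_inr, Matrix.zero_mulVec, Matrix.mulVec_zero,
      add_zero, zero_add, sum_elim_eq_zero_iff] at hv
    obtain ⟨⟨⟨ha1, ha2⟩, ha3⟩, hb⟩ := hv
    have hv2 : v₂ = 0 := hA₂ _ ha2
    have := h (Sum.elim v₁ v₃) ?_
    · rw [hvdef]
      simp only [sum_elim_eq_zero_iff] at this ⊢
      exact ⟨⟨this.1, hv2⟩, this.2⟩
    · simp only [fromRows_mulVec, fromBlocks_mulVec, fromCols_mulVec_sumElim,
        Sum.elim_comp_inl, Sum.elim_comp_inr, Matrix.zero_mulVec, Matrix.mulVec_zero,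
        add_zero, zero_add, sum_elim_eq_zero_iff]
      refine ⟨⟨ha1, ha3⟩, ?_⟩
      rw [hv2, Matrix.mulVec_zero, add_zero] at hb
      exact hb
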